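/- arXiv:1005.5579 — 6 statements merged into one kernel-verified Lean document; each statement's English description precedes it below -/
import Mathlib

section
/- Let β ∈ ℚ with β ≠ 1 and β ≠ −1, and let k, l be distinct positive coprime integers. Let F(X, Y, Z) = l·X·(X + (β−1)Z)·(X + (β+1)Z) − k·Y·(Y + (β−1)Z)·(Y + (β+1)Z), the homogenization of the generalized Holm curve H_β. Then the projective plane cubic F = 0 is smooth: there is no nonzero triple (X, Y, Z) ∈ ℂ³ at which all three partial derivatives ∂F/∂X, ∂F/∂Y, ∂F/∂Z vanish simultaneously. -/
/-- The homogenization of the generalized Holm curve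
`H_β : l·x·(x+β−1)·(x+β+1) = k·y·(y+β−1)·(y+β+1)`, as a function on `ℂ³`. -/
noncomputable def holmHomog (β : ℚ) (k l : ℕ) (X Y Z : ℂ) : ℂ :=
  (l : ℂ) * X * (X + ((β : ℂ) - 1) * Z) * (X + ((β : ℂ) + 1) * Z) -
    (k : ℂ) * Y * (Y + ((β : ℂ) - 1) * Z) * (Y + ((β : ℂ) + 1) * Z)

private lemma deriv_cubic' (a b c d x : ℂ) :
    deriv (fun t : ℂ => a * t ^ 3 + b * t ^ 2 + c * t + d) x
      = 3 * a * x ^ 2 + 2 * b * x + c := by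
  have h : HasDerivAt (fun t : ℂ => a * t ^ 3 + b * t ^ 2 + c * t + d)
      (a * (((3 : ℕ) : ℂ) * x ^ 2) + b * (((2 : ℕ) : ℂ) * x ^ 1) + c * 1 + 0) x :=
    ((((hasDerivAt_pow 3 x).const_mul a).add ((hasDerivAt_pow 2 x).const_mul b)).add
      ((hasDerivAt_id x).const_mul c)).add (hasDerivAt_const x d)
  rw [h.deriv]; push_cast; ring

/-- For `β ∈ ℚ` with `β ≠ ±1` and distinct positive coprime integers `k, l`, the
projective plane cubic obtained by homogenizing the generalized Holm curve `H_β` is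
smooth: there is no nonzero `(X, Y, Z) ∈ ℂ³` at which all three partial derivatives of
the defining cubic vanish simultaneously. -/
theorem holm_curve_smooth (β : ℚ) (hβ1 : β ≠ 1) (hβ2 : β ≠ -1)
    (k l : ℕ) (hk : 0 < k) (hl : 0 < l) (hne : k ≠ l) (hkl : Nat.Coprime k l) :
    ¬ ∃ X Y Z : ℂ, (X, Y, Z) ≠ (0, 0, 0) ∧
      deriv (fun X' => holmHomog β k l X' Y Z) X = 0 ∧
      deriv (fun Y' => holmHomog β k l X Y' Z) Y = 0 ∧
      deriv (fun Z' => holmHomog β k l X Y Z') Z = 0 := by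
  rintro ⟨X, Y, Z, hne0, hdX, hdY, hdZ⟩
  have hq : β ^ 2 ≠ 1 := by
    intro h
    have h2 : (β - 1) * (β + 1) = 0 := by linear_combination h
    rcases mul_eq_zero.mp h2 with h3 | h3
    · exact hβ1 (by linarith [sub_eq_zero.mp h3])
    · exact hβ2 (by linarith)
  have hc1 : ((β : ℂ) ^ 2 - 1) ≠ 0 := by
    have : ((β ^ 2 - 1 : ℚ) : ℂ) ≠ 0 := by
      exact_mod_cast sub_ne_zero.mpr hq
    push_cast at this
    convert this using 2
  have hl0 : (l : ℂ) ≠ 0 := Nat.cast_ne_zero.mpr hl.ne'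
  have hk0 : (k : ℂ) ≠ 0 := Nat.cast_ne_zero.mpr hk.ne'
  have hlk : (l : ℂ) ≠ (k : ℂ) := by exact_mod_cast hne.symm
  -- compute the three partial derivatives explicitly
  have hfX : (fun X' => holmHomog β k l X' Y Z)
      = fun t : ℂ => (l : ℂ) * t ^ 3 + (2 * (l : ℂ) * (β : ℂ) * Z) * t ^ 2
        + ((l : ℂ) * ((β : ℂ) ^ 2 - 1) * Z ^ 2) * t
        + (-((k : ℂ) * Y * (Y + ((β : ℂ) - 1) * Z) * (Y + ((β : ℂ) + 1) * Z))) := by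
    funext t; simp only [holmHomog]; ring
  have hfY : (fun Y' => holmHomog β k l X Y' Z)
      = fun t : ℂ => (-(k : ℂ)) * t ^ 3 + (-(2 * (k : ℂ) * (β : ℂ) * Z)) * t ^ 2
        + (-((k : ℂ) * ((β : ℂ) ^ 2 - 1) * Z ^ 2)) * t
        + ((l : ℂ) * X * (X + ((β : ℂ) - 1) * Z) * (X + ((β : ℂ) + 1) * Z)) := by
    funext t; simp only [holmHomog]; ring
  have hfZ : (fun Z' => holmHomog β k l X Y Z')
      = fun t : ℂ => (0 : ℂ) * t ^ 3
        + (((β : ℂ) ^ 2 - 1) * ((l : ℂ) * X - (k : ℂ) * Y)) * t ^ 2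
        + (2 * (β : ℂ) * ((l : ℂ) * X ^ 2 - (k : ℂ) * Y ^ 2)) * t
        + ((l : ℂ) * X ^ 3 - (k : ℂ) * Y ^ 3) := by
    funext t; simp only [holmHomog]; ring
  rw [hfX, deriv_cubic'] at hdX
  rw [hfY, deriv_cubic'] at hdY
  rw [hfZ, deriv_cubic'] at hdZ
  have e1 : (l : ℂ) * (3 * X ^ 2 + 4 * (β : ℂ) * X * Z + ((β : ℂ) ^ 2 - 1) * Z ^ 2) = 0 := by
    linear_combination hdX
  have e2 : (k : ℂ) * (3 * Y ^ 2 + 4 * (β : ℂ) * Y * Z + ((β : ℂ) ^ 2 - 1) * Z ^ 2) = 0 := by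
    linear_combination -hdY
  have e1' : 3 * X ^ 2 + 4 * (β : ℂ) * X * Z + ((β : ℂ) ^ 2 - 1) * Z ^ 2 = 0 :=
    (mul_eq_zero.mp e1).resolve_left hl0
  have e2' : 3 * Y ^ 2 + 4 * (β : ℂ) * Y * Z + ((β : ℂ) ^ 2 - 1) * Z ^ 2 = 0 :=
    (mul_eq_zero.mp e2).resolve_left hk0
  have e3 : ((β : ℂ) ^ 2 - 1) * ((l : ℂ) * X - (k : ℂ) * Y) * Z
      + (β : ℂ) * ((l : ℂ) * X ^ 2 - (k : ℂ) * Y ^ 2) = 0 := by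
    linear_combination hdZ / 2
  by_cases hZ : Z = 0
  · subst hZ
    have hX2 : X ^ 2 = 0 := by linear_combination e1' / 3
    have hY2 : Y ^ 2 = 0 := by linear_combination e2' / 3
    have hX0 : X = 0 := pow_eq_zero_iff (two_ne_zero) |>.mp hX2
    have hY0 : Y = 0 := pow_eq_zero_iff (two_ne_zero) |>.mp hY2
    exact hne0 (by simp [hX0, hY0])
  · -- Z ≠ 0
    have hH0 : Z ^ 2 * ((l : ℂ) * (((β : ℂ) ^ 2 + 3) * X + (β : ℂ) * ((β : ℂ) ^ 2 - 1) * Z)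
        - (k : ℂ) * (((β : ℂ) ^ 2 + 3) * Y + (β : ℂ) * ((β : ℂ) ^ 2 - 1) * Z)) = 0 := by
      linear_combination (-3 * Z) * e3 + (l : ℂ) * (β : ℂ) * Z * e1'
        - (k : ℂ) * (β : ℂ) * Z * e2'
    have hH : (l : ℂ) * (((β : ℂ) ^ 2 + 3) * X + (β : ℂ) * ((β : ℂ) ^ 2 - 1) * Z)
        = (k : ℂ) * (((β : ℂ) ^ 2 + 3) * Y + (β : ℂ) * ((β : ℂ) ^ 2 - 1) * Z) :=
      sub_eq_zero.mp ((mul_eq_zero.mp hH0).resolve_left (pow_ne_zero 2 hZ))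
    by_cases hXY : X = Y
    · subst hXY
      have hsub : ((l : ℂ) - (k : ℂ))
          * (((β : ℂ) ^ 2 + 3) * X + (β : ℂ) * ((β : ℂ) ^ 2 - 1) * Z) = 0 := by
        linear_combination hH
      have hA : ((β : ℂ) ^ 2 + 3) * X + (β : ℂ) * ((β : ℂ) ^ 2 - 1) * Z = 0 :=
        (mul_eq_zero.mp hsub).resolve_left (sub_ne_zero.mpr hlk)
      have hbad : (((β : ℂ) ^ 2 - 1) * Z) ^ 2 = 0 := by
        linear_combination (3 * ((β : ℂ) ^ 2 + 3) * X / 9 + (β : ℂ) * ((β : ℂ) ^ 2 + 15) * Z / 9) * hA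
          - (((β : ℂ) ^ 2 + 3) ^ 2 / 9) * e1'
      exact (mul_ne_zero hc1 hZ) (pow_eq_zero_iff (two_ne_zero) |>.mp hbad)
    · have hSfac : (X - Y) * (3 * (X + Y) + 4 * (β : ℂ) * Z) = 0 := by
        linear_combination e1' - e2'
      have hS : 3 * (X + Y) + 4 * (β : ℂ) * Z = 0 :=
        (mul_eq_zero.mp hSfac).resolve_left (sub_ne_zero.mpr hXY)
      have hD2 : 9 * (X - Y) ^ 2 = 4 * ((β : ℂ) ^ 2 + 3) * Z ^ 2 := by
        linear_combination 6 * e1' + 6 * e2' - (3 * (X + Y) + 4 * (β : ℂ) * Z) * hS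
      have hD : 3 * ((β : ℂ) ^ 2 + 3) * ((l : ℂ) + (k : ℂ)) * (X - Y)
          + 2 * ((l : ℂ) - (k : ℂ)) * (β : ℂ) * ((β : ℂ) ^ 2 - 9) * Z = 0 := by
        linear_combination 6 * hH - ((l : ℂ) - (k : ℂ)) * ((β : ℂ) ^ 2 + 3) * hS
      have hKey0 : Z ^ 2 * (((l : ℂ) + (k : ℂ)) ^ 2 * ((β : ℂ) ^ 2 + 3) ^ 3
          - ((l : ℂ) - (k : ℂ)) ^ 2 * (β : ℂ) ^ 2 * ((β : ℂ) ^ 2 - 9) ^ 2) = 0 := by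
        linear_combination ((3 * ((β : ℂ) ^ 2 + 3) * ((l : ℂ) + (k : ℂ)) * (X - Y)
            - 2 * ((l : ℂ) - (k : ℂ)) * (β : ℂ) * ((β : ℂ) ^ 2 - 9) * Z) / 4) * hD
          - (((β : ℂ) ^ 2 + 3) ^ 2 * ((l : ℂ) + (k : ℂ)) ^ 2 / 4) * hD2
      have key : ((l : ℂ) + (k : ℂ)) ^ 2 * ((β : ℂ) ^ 2 + 3) ^ 3
          = ((l : ℂ) - (k : ℂ)) ^ 2 * (β : ℂ) ^ 2 * ((β : ℂ) ^ 2 - 9) ^ 2 :=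
        sub_eq_zero.mp ((mul_eq_zero.mp hKey0).resolve_left (pow_ne_zero 2 hZ))
      have keyQ : ((l : ℚ) + (k : ℚ)) ^ 2 * ((β : ℚ) ^ 2 + 3) ^ 3
          = ((l : ℚ) - (k : ℚ)) ^ 2 * (β : ℚ) ^ 2 * ((β : ℚ) ^ 2 - 9) ^ 2 := by
        exact_mod_cast key
      have hcontr : 27 * ((l : ℚ) + (k : ℚ)) ^ 2 * (β ^ 2 - 1) ^ 2
          + 4 * (k : ℚ) * (l : ℚ) * β ^ 2 * (β ^ 2 - 9) ^ 2 = 0 := by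
        linear_combination keyQ
      have h2 : 0 < ((l : ℚ) + (k : ℚ)) := by
        have h2a : 0 < (l : ℚ) := by exact_mod_cast hl
        have h2b : 0 ≤ (k : ℚ) := k.cast_nonneg
        linarith
      have h1 : 0 < (β ^ 2 - 1) ^ 2 :=
        lt_of_le_of_ne (sq_nonneg _) (Ne.symm (pow_ne_zero 2 (sub_ne_zero.mpr hq)))
      have hT : 0 < 27 * ((l : ℚ) + (k : ℚ)) ^ 2 * (β ^ 2 - 1) ^ 2 :=
        mul_pos (mul_pos (by norm_num) (pow_pos h2 2)) h1
      have h3 : 0 ≤ 4 * (k : ℚ) * (l : ℚ) * β ^ 2 * (β ^ 2 - 9) ^ 2 := by positivity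
      linarith
end

section
/- Let β, k, l ∈ ℚ. Suppose (x, y) ∈ ℚ² satisfies l·x·(x+β−1)·(x+β+1) = k·y·(y+β−1)·(y+β+1) and l·x ≠ k·y. Define X = k·l·(−3·l·y + k·(3x + 6β − (3x+4y)·β² − 6β³) + l·β·(−6 + 4xβ + 3β(y+2β))) / (3·l·x − 3·k·y) and Y = −k·l·(k−l)·(β²−1)·(k·l·(x−y)·(1 + 2(x+y)β + 3β²) − l²·x·(−1 + β(x+β)) + k²·y·(−1 + β(y+β))) / (l·x − k·y)². Then Y² = X³ − (1/3)·k²·l²·(3+β²)²·X + (1/27)·k²·l²·(2·k·l·β²·(β²−9)² + 27·k²·(β²−1)² + 27·l²·(β²−1)²); that is, (X, Y) is a rational point of the Jacobian curve E_β. -/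
/-- The rational transformation `(x, y) ↦ (X, Y)` maps rational points of the
generalized Holm curve `H_β : l·x·(x+β−1)·(x+β+1) = k·y·(y+β−1)·(y+β+1)` with
`l·x ≠ k·y` to rational points of its Jacobian
`E_β : Y² = X³ − (1/3)k²l²(3+β²)²·X + (1/27)k²l²(2klβ²(β²−9)² + 27k²(β²−1)² + 27l²(β²−1)²)`. -/
theorem holm_to_jacobian (β k l x y X Y : ℚ)
    (hH : l * x * (x + β - 1) * (x + β + 1) = k * y * (y + β - 1) * (y + β + 1))
    (hxy : l * x ≠ k * y)
    (hX : X = k * l * (-3 * l * y + k * (3 * x + 6 * β - (3 * x + 4 * y) * β ^ 2 - 6 * β ^ 3)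
        + l * β * (-6 + 4 * x * β + 3 * β * (y + 2 * β))) / (3 * l * x - 3 * k * y))
    (hY : Y = -(k * l * (k - l) * (β ^ 2 - 1) *
        (k * l * (x - y) * (1 + 2 * (x + y) * β + 3 * β ^ 2)
          - l ^ 2 * x * (-1 + β * (x + β)) + k ^ 2 * y * (-1 + β * (y + β)))) /
        (l * x - k * y) ^ 2) :
    Y ^ 2 = X ^ 3 - (1 / 3) * k ^ 2 * l ^ 2 * (3 + β ^ 2) ^ 2 * X +
      (1 / 27) * k ^ 2 * l ^ 2 *
        (2 * k * l * β ^ 2 * (β ^ 2 - 9) ^ 2 + 27 * k ^ 2 * (β ^ 2 - 1) ^ 2 +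
          27 * l ^ 2 * (β ^ 2 - 1) ^ 2) := by
  have hd : l * x - k * y ≠ 0 := sub_ne_zero.mpr hxy
  have hd3 : 3 * l * x - 3 * k * y ≠ 0 := by intro h; apply hd; linarith
  subst hX hY
  field_simp
  linear_combination (5832*β^7*k^6*l^3 - 17496*β^7*k^5*l^4 + 17496*β^7*k^4*l^5 - 5832*β^7*k^3*l^6 - 729*β^6*k^7*l^2*y + 3645*β^6*k^6*l^3*x + 5832*β^6*k^6*l^3*y - 11664*β^6*k^5*l^4*x - 13122*β^6*k^5*l^4*y + 13122*β^6*k^4*l^5*x + 11664*β^6*k^4*l^5*y - 5832*β^6*k^3*l^6*x - 3645*β^6*k^3*l^6*y + 729*β^6*k^2*l^7*x - 11664*β^5*k^6*l^3 + 34992*β^5*k^5*l^4 - 34992*β^5*k^4*l^5 + 11664*β^5*k^3*l^6 + 2187*β^4*k^7*l^2*y - 8019*β^4*k^6*l^3*x - 11664*β^4*k^6*l^3*y + 23328*β^4*k^5*l^4*x + 24786*β^4*k^5*l^4*y - 24786*β^4*k^4*l^5*x - 23328*β^4*k^4*l^5*y + 11664*β^4*k^3*l^6*x + 8019*β^4*k^3*l^6*y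 - 2187*β^4*k^2*l^7*x + 5832*β^3*k^6*l^3 - 17496*β^3*k^5*l^4 + 17496*β^3*k^4*l^5 - 5832*β^3*k^3*l^6 - 2187*β^2*k^7*l^2*y + 5103*β^2*k^6*l^3*x + 5832*β^2*k^6*l^3*y - 11664*β^2*k^5*l^4*x - 10206*β^2*k^5*l^4*y + 10206*β^2*k^4*l^5*x + 11664*β^2*k^4*l^5*y - 5832*β^2*k^3*l^6*x - 5103*β^2*k^3*l^6*y + 2187*β^2*k^2*l^7*x + 729*k^7*l^2*y - 729*k^6*l^3*x - 1458*k^5*l^4*y + 1458*k^4*l^5*x + 729*k^3*l^6*y - 729*k^2*l^7*x) * hH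
end

section
/- Let k, l be distinct positive integers and let β ∈ ℝ with β ≠ 1 and β ≠ −1. Then the cubic polynomial f(X) = X³ − (1/3)·k²·l²·(3+β²)²·X + (1/27)·k²·l²·(2·k·l·β²·(β²−9)² + 27·k²·(β²−1)² + 27·l²·(β²−1)²) has exactly one real root; equivalently, the group of real points of the elliptic curve E_β : Y² = f(X) contains exactly one element of order 2, i.e., E_β(ℝ)[2] ≅ ℤ/2ℤ. -/
/-- A depressed cubic `x³ + px + q` with positive "negative discriminant"
`4p³ + 27q² > 0` has exactly one real root. -/
lemma cubic_exists_unique_root (p q : ℝ) (h : 0 < 4 * p ^ 3 + 27 * q ^ 2) :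
    ∃! x : ℝ, x ^ 3 + p * x + q = 0 := by
  -- existence via IVT
  have hcont : Continuous fun x : ℝ => x ^ 3 + p * x + q := by continuity
  set b : ℝ := 1 + |p| + |q| with hb
  have hb1 : 1 ≤ b := by rw [hb]; linarith [abs_nonneg p, abs_nonneg q]
  have hb0 : 0 ≤ b := by linarith
  have e1 : b ^ 2 = b + |p| * b + |q| * b := by rw [hb]; ring
  have e2 : b ^ 2 ≤ b ^ 3 := by nlinarith
  have e3 : |q| ≤ |q| * b := le_mul_of_one_le_right (abs_nonneg q) hb1
  have c1 : 0 ≤ (|p| + p) * b :=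
    mul_nonneg (by linarith [neg_abs_le p]) hb0
  have c2 : 0 ≤ (|p| - p) * b :=
    mul_nonneg (by linarith [le_abs_self p]) hb0
  have hfb : 0 < b ^ 3 + p * b + q := by
    nlinarith [neg_abs_le q]
  have hfnb : (-b) ^ 3 + p * (-b) + q < 0 := by
    nlinarith [le_abs_self q]
  obtain ⟨x, _, hx⟩ := intermediate_value_Icc (by linarith : (-b : ℝ) ≤ b)
    hcont.continuousOn (Set.mem_Icc.mpr ⟨le_of_lt hfnb, le_of_lt hfb⟩)
  refine ⟨x, hx, ?_⟩
  intro y hy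
  by_contra hne
  have hsub : y - x ≠ 0 := sub_ne_zero.mpr hne
  have hd : x ^ 2 + x * y + y ^ 2 + p = 0 := by
    have h2 : (y - x) * (x ^ 2 + x * y + y ^ 2 + p) = 0 := by linear_combination hy - hx
    rcases mul_eq_zero.mp h2 with h3 | h3
    · exact absurd h3 hsub
    · exact h3
  have hp : p = -(x ^ 2 + x * y + y ^ 2) := by linarith
  have hq : q = x ^ 2 * y + x * y ^ 2 := by linear_combination hx - x * hd
  rw [hp, hq] at h
  nlinarith [sq_nonneg ((x - y) * (2 * x + y) * (x + 2 * y)), h]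

/-- For distinct positive integers `k, l` and `β ∈ ℝ` with `β ≠ ±1`, the cubic
`f(X) = X³ − (1/3)k²l²(3+β²)²·X + (1/27)k²l²(2klβ²(β²−9)² + 27k²(β²−1)² + 27l²(β²−1)²)`
has exactly one real root; equivalently, `E_β(ℝ)[2] ≅ ℤ/2ℤ` for the elliptic curve
`E_β : Y² = f(X)`. -/
theorem jacobian_cubic_unique_real_root (k l : ℕ) (hk : 0 < k) (hl : 0 < l) (hne : k ≠ l)
    (β : ℝ) (hβ1 : β ≠ 1) (hβ2 : β ≠ -1) :
    ∃! X : ℝ, X ^ 3 - (1 / 3) * (k : ℝ) ^ 2 * (l : ℝ) ^ 2 * (3 + β ^ 2) ^ 2 * X +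
      (1 / 27) * (k : ℝ) ^ 2 * (l : ℝ) ^ 2 *
        (2 * k * l * β ^ 2 * (β ^ 2 - 9) ^ 2 + 27 * (k : ℝ) ^ 2 * (β ^ 2 - 1) ^ 2 +
          27 * (l : ℝ) ^ 2 * (β ^ 2 - 1) ^ 2) = 0 := by
  set K : ℝ := (k : ℝ) with hK
  set L : ℝ := (l : ℝ) with hL
  have hK0 : 0 < K := by simp only [hK]; exact_mod_cast hk
  have hL0 : 0 < L := by simp only [hL]; exact_mod_cast hl
  have hKL : K ≠ L := by
    simp only [hK, hL, Ne, Nat.cast_inj]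
    exact hne
  set p : ℝ := -((1 / 3) * K ^ 2 * L ^ 2 * (3 + β ^ 2) ^ 2) with hp
  set q : ℝ := (1 / 27) * K ^ 2 * L ^ 2 *
      (2 * K * L * β ^ 2 * (β ^ 2 - 9) ^ 2 + 27 * K ^ 2 * (β ^ 2 - 1) ^ 2 +
        27 * L ^ 2 * (β ^ 2 - 1) ^ 2) with hq
  have hdisc : 0 < 4 * p ^ 3 + 27 * q ^ 2 := by
    have key : 4 * p ^ 3 + 27 * q ^ 2 =
        K ^ 4 * L ^ 4 * (β ^ 2 - 1) ^ 2 * (K - L) ^ 2 *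
          (2 * K * L * β ^ 2 * (β ^ 2 - 9) ^ 2 + 27 * (K ^ 2 + L ^ 2) * (β ^ 2 - 1) ^ 2 +
            2 * K * L * (3 + β ^ 2) ^ 3) := by
      rw [hp, hq]; ring
    rw [key]
    have hb : (β ^ 2 - 1) ^ 2 > 0 := by
      have : β ^ 2 - 1 ≠ 0 := by
        intro h0
        have : (β - 1) * (β + 1) = 0 := by linear_combination h0
        rcases mul_eq_zero.mp this with h1 | h1
        · exact hβ1 (by linarith)
        · exact hβ2 (by linarith)
      positivity
    have hkl : (K - L) ^ 2 > 0 := by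
      have : K - L ≠ 0 := sub_ne_zero.mpr hKL
      positivity
    have hS : 0 < 2 * K * L * β ^ 2 * (β ^ 2 - 9) ^ 2 + 27 * (K ^ 2 + L ^ 2) * (β ^ 2 - 1) ^ 2 +
        2 * K * L * (3 + β ^ 2) ^ 3 := by
      have h1 : 0 ≤ 2 * K * L * β ^ 2 * (β ^ 2 - 9) ^ 2 := by positivity
      have h2 : 0 ≤ 27 * (K ^ 2 + L ^ 2) * (β ^ 2 - 1) ^ 2 := by positivity
      have h3 : 0 < 2 * K * L * (3 + β ^ 2) ^ 3 := by positivity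
      linarith
    positivity
  obtain ⟨x, hx1, hx2⟩ := cubic_exists_unique_root p q hdisc
  refine ⟨x, ?_, ?_⟩
  · linear_combination hx1
  · intro y hy
    exact hx2 y (by linear_combination hy)
end

section
/- Let β, k, l ∈ ℚ with k + l ≠ 0. Then the point (x₀, y₀) = (β·(l−k)/(l+k), −β·(l−k)/(l+k)) satisfies l·(x₀ − β)·(x₀ − 1)·(x₀ + 1) = k·(y₀ − β)·(y₀ − 1)·(y₀ + 1); that is, the tangent line to the curve l·(x−β)(x−1)(x+1) = k·(y−β)(y−1)(y+1) at the point (β, β) meets the curve again in the rational point (β(l−k)/(l+k), −β(l−k)/(l+k)). -/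
/-- The tangent line to the (translated) generalized Holm curve
`l·(x−β)(x−1)(x+1) = k·(y−β)(y−1)(y+1)` at `(β, β)` meets the curve again in the
rational point `(β(l−k)/(l+k), −β(l−k)/(l+k))`: this point satisfies the curve
equation. -/
theorem holm_tangent_point (β k l : ℚ) (hkl : k + l ≠ 0) :
    l * ((β * (l - k) / (l + k)) - β) * ((β * (l - k) / (l + k)) - 1) *
        ((β * (l - k) / (l + k)) + 1) =
      k * ((-(β * (l - k) / (l + k))) - β) * ((-(β * (l - k) / (l + k))) - 1) *
        ((-(β * (l - k) / (l + k))) + 1) := by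
  have h : l + k ≠ 0 := by rwa [add_comm] at hkl
  field_simp
  ring
end

section
/- Let θ ∈ (0, π) with cos θ ∈ ℚ, and write cos θ = s/r with r, s coprime integers and r > 0. Let n be a positive squarefree integer. Then n is θ-congruent if and only if there exist x, y ∈ ℚ with y ≠ 0 such that n·y² = x·(x + s/r − 1)·(x + s/r + 1)/r; equivalently, if and only if the elliptic curve E_{n,θ} : n·y² = (1/r)·x·(x + cos θ − 1)·(x + cos θ + 1) has a rational point of order greater than 2. -/
/-- A positive squarefree integer `n` is `θ`-congruent (where `cos θ = s / r` with
`r > 0` and `gcd(s, r) = 1`) if `n * r * sin θ` is the area of a triangle with rational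
sides and an angle `θ`; equivalently, there are positive rationals `a, b, c` with
`a * b = 2 * n * r` and `c ^ 2 = a ^ 2 + b ^ 2 - 2 * a * b * (s / r)`. -/
def IsThetaCongruent (r s : ℤ) (n : ℕ) : Prop :=
  ∃ a b c : ℚ, 0 < a ∧ 0 < b ∧ 0 < c ∧
    a * b = 2 * (n : ℚ) * (r : ℚ) ∧
    c ^ 2 = a ^ 2 + b ^ 2 - 2 * a * b * ((s : ℚ) / (r : ℚ))

/-- Auxiliary: from a `θ`-triangle to a point of infinite order on the curve. -/
lemma fujiwara_aux_fwd (n r t a b c : ℚ) (hb : 0 < b) (hrne : r ≠ 0) (ht1 : t ^ 2 < 1)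
    (hab : a * b = 2 * n * r)
    (hc2 : c ^ 2 = a ^ 2 + b ^ 2 - 2 * a * b * t) :
    ∃ x y : ℚ, y ≠ 0 ∧ n * y ^ 2 = x * (x + t - 1) * (x + t + 1) / r := by
  have hb0 : b ≠ 0 := ne_of_gt hb
  have hne : a + c - b * t ≠ 0 := by
    intro h
    have h1 : b ^ 2 * t ^ 2 = b ^ 2 * 1 := by
      linear_combination hc2 + (a - b * t - c) * h
    have h2 : t ^ 2 = 1 := mul_left_cancel₀ (pow_ne_zero 2 hb0) h1
    linarith
  refine ⟨(a + c - b * t) / b, 2 * (a + c - b * t) / b ^ 2, ?_, ?_⟩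
  · exact div_ne_zero (mul_ne_zero two_ne_zero hne) (pow_ne_zero 2 hb0)
  · rw [eq_div_iff hrne]
    field_simp
    linear_combination (-2 * (a + c - b * t)) * hab +
      (-b) * hc2

/-- Auxiliary: from a point of infinite order on the curve to a `θ`-triangle. -/
lemma fujiwara_aux_rev (n r t x y : ℚ) (hy : y ≠ 0) (hr : 0 < r) (hn : 0 < n)
    (ht1 : t ^ 2 < 1)
    (heq : n * y ^ 2 = x * (x + t - 1) * (x + t + 1) / r) :
    ∃ a b c : ℚ, 0 < a ∧ 0 < b ∧ 0 < c ∧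
      a * b = 2 * n * r ∧ c ^ 2 = a ^ 2 + b ^ 2 - 2 * a * b * t := by
  have hrne : r ≠ 0 := ne_of_gt hr
  rw [eq_div_iff hrne] at heq
  have key : n * r * |y| ^ 2 = x * ((x + t) ^ 2 - 1) := by
    rw [sq_abs]; linear_combination heq
  have hpos : 0 < x * ((x + t) ^ 2 - 1) := by
    rw [← key]; positivity
  have hyabs : (0 : ℚ) < |y| := abs_pos.mpr hy
  have hxne : x ≠ 0 := by rintro rfl; simp at hpos
  have hDne : (x + t) ^ 2 - 1 ≠ 0 := by
    intro h; rw [h, mul_zero] at hpos; exact lt_irrefl 0 hpos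
  have habs : |x| * |(x + t) ^ 2 - 1| = x * ((x + t) ^ 2 - 1) := by
    rw [← abs_mul, abs_of_pos hpos]
  have hx2 : |x| ^ 2 = x ^ 2 := sq_abs x
  have hD2 : |(x + t) ^ 2 - 1| ^ 2 = ((x + t) ^ 2 - 1) ^ 2 := sq_abs _
  refine ⟨|(x + t) ^ 2 - 1| / |y|, 2 * |x| / |y|, (x ^ 2 + 1 - t ^ 2) / |y|,
    ?_, ?_, ?_, ?_, ?_⟩
  · exact div_pos (abs_pos.mpr hDne) hyabs
  · exact div_pos (mul_pos two_pos (abs_pos.mpr hxne)) hyabs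
  · exact div_pos (by nlinarith [sq_nonneg x]) hyabs
  · rw [div_mul_div_comm, div_eq_iff (by positivity : |y| * |y| ≠ 0)]
    linear_combination 2 * habs - 2 * key
  · linear_combination (-1 / |y| ^ 2) * hD2 + (-4 / |y| ^ 2) * hx2 +
      (4 * t / |y| ^ 2) * habs

/-- (Fujiwara) A positive squarefree integer `n` is `θ`-congruent if and only if the
elliptic curve `E_{n,θ} : n·y² = (1/r)·x·(x + cos θ − 1)·(x + cos θ + 1)` has a rational
point of order greater than `2`, i.e. an affine rational point `(x, y)` with `y ≠ 0`. -/
theorem fujiwara_theta_congruent_iff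
    (θ : ℝ) (hθ0 : 0 < θ) (hθπ : θ < Real.pi)
    (r s : ℤ) (hr : 0 < r) (hrs : Int.gcd s r = 1)
    (hcos : Real.cos θ = (s : ℝ) / (r : ℝ))
    (n : ℕ) (hn : 0 < n) (hnsf : Squarefree n) :
    IsThetaCongruent r s n ↔
      ∃ x y : ℚ, y ≠ 0 ∧ (n : ℚ) * y ^ 2 =
        x * (x + (s : ℚ) / (r : ℚ) - 1) * (x + (s : ℚ) / (r : ℚ) + 1) / (r : ℚ) := by
  have hr0 : (0 : ℚ) < (r : ℚ) := by exact_mod_cast hr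
  have hrne : (r : ℚ) ≠ 0 := ne_of_gt hr0
  have hn0 : (0 : ℚ) < (n : ℚ) := by exact_mod_cast hn
  have hcos1 : Real.cos θ < 1 := by
    have := Real.cos_lt_cos_of_nonneg_of_le_pi (le_refl 0) hθπ.le hθ0
    simpa using this
  have hcosm1 : -1 < Real.cos θ := by
    have := Real.cos_lt_cos_of_nonneg_of_le_pi hθ0.le (le_refl Real.pi) hθπ
    simpa using this
  have ht1 : ((s : ℚ) / (r : ℚ)) ^ 2 < 1 := by
    have hR : (((s : ℚ) / (r : ℚ) : ℚ) : ℝ) = Real.cos θ := by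
      push_cast
      rw [hcos]
    have h2 : (((s : ℚ) / (r : ℚ) : ℚ) : ℝ) ^ 2 < 1 := by
      rw [hR]; nlinarith
    exact_mod_cast h2
  constructor
  · rintro ⟨a, b, c, _, hb, _, hab, hc2⟩
    exact fujiwara_aux_fwd (n : ℚ) (r : ℚ) ((s : ℚ) / (r : ℚ)) a b c hb hrne ht1 hab hc2
  · rintro ⟨x, y, hy, heq⟩
    obtain ⟨a, b, c, ha, hb, hc, hab, hc2⟩ :=
      fujiwara_aux_rev (n : ℚ) (r : ℚ) ((s : ℚ) / (r : ℚ)) x y hy hr0 hn0 ht1 heq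
    exact ⟨a, b, c, ha, hb, hc, hab, hc2⟩
end

section
/- Let θ ∈ (0, π) with cos θ ∈ ℚ, and write cos θ = s/r (so −1 < s/r < 1) with r, s coprime integers and r > 0; set β = s/r. Let x ∈ ℚ and set A = x·(x+β−1)·(x+β+1)/r. If A > 0, then the squarefree part of A, i.e., the unique squarefree positive integer N such that A/N is the square of a rational number, is a θ-congruent number. -/
lemma aux_theta (n R S X Y : ℚ) (hn : 0 < n) (hR : 0 < R) (hS : S^2 < R^2)
    (hY : Y ≠ 0) (hXP : Y^2 = X * ((X - n*(R-S)) * (X + n*(R+S)))) :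
    ∃ a b c : ℚ, 0 < a ∧ 0 < b ∧ 0 < c ∧ a*b = 2*n*R ∧
      c^2 = a^2 + b^2 - 2*a*b*(S/R) := by
  set P := (X - n*(R-S)) * (X + n*(R+S)) with hP
  have hY2 : Y^2 ≠ 0 := pow_ne_zero 2 hY
  have hX0 : X ≠ 0 := by intro h; apply hY2; rw [hXP, h]; ring
  have hP0 : P ≠ 0 := by intro h; apply hY2; rw [hXP, h]; ring
  have hYap : 0 < |Y| := abs_pos.mpr hY
  have hYa : |Y| ≠ 0 := ne_of_gt hYap
  set a := |P| / |Y| with ha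
  set b := 2*n*R*|X| / |Y| with hb
  set c := (X^2 + n^2*(R^2 - S^2)) / |Y| with hc
  have h1 : |P| * |X| = Y^2 := by
    rw [← abs_mul, mul_comm, ← hXP, abs_of_nonneg (sq_nonneg Y)]
  have hab : a * b = 2*n*R := by
    rw [ha, hb, div_mul_div_comm, div_eq_iff (by positivity : |Y| * |Y| ≠ 0)]
    have : |Y| * |Y| = Y^2 := by rw [← sq, sq_abs]
    rw [this]
    linear_combination (2*n*R) * h1
  refine ⟨a, b, c, ?_, ?_, ?_, hab, ?_⟩
  · exact div_pos (abs_pos.mpr hP0) hYap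
  · exact div_pos (by positivity) hYap
  · have h2 : 0 < X^2 + n^2*(R^2 - S^2) := by
      have h3 := mul_pos (pow_pos hn 2) (sub_pos.mpr hS)
      linarith [sq_nonneg X]
    exact div_pos h2 hYap
  · have hcross : 2*a*b*(S/R) = 4*n*S := by
      rw [show 2*a*b*(S/R) = 2*(a*b)*(S/R) by ring, hab]
      field_simp
      ring
    rw [hcross, ha, hb, hc]
    simp only [div_pow, mul_pow, sq_abs]
    field_simp
    simp only [hP] at hXP ⊢
    linear_combination (4*n*S) * hXP

/-- Let `θ ∈ (0, π)` with `cos θ = s/r ∈ ℚ` and set `β = s/r`. For `x ∈ ℚ`, if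
`A = x·(x+β−1)·(x+β+1)/r > 0`, then the squarefree part of `A` is a `θ`-congruent
number. -/
theorem squarefree_part_is_theta_congruent
    (θ : ℝ) (hθ0 : 0 < θ) (hθπ : θ < Real.pi)
    (r s : ℤ) (hr : 0 < r) (hrs : Int.gcd s r = 1)
    (hcos : Real.cos θ = (s : ℝ) / (r : ℝ))
    (β : ℚ) (hβ : β = (s : ℚ) / (r : ℚ))
    (x A : ℚ) (hA : A = x * (x + β - 1) * (x + β + 1) / (r : ℚ)) (hApos : 0 < A)
    (N : ℕ) (hNpos : 0 < N) (hNsf : Squarefree N)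
    (hNsq : ∃ t : ℚ, A = (N : ℚ) * t ^ 2) :
    IsThetaCongruent r s N := by
  obtain ⟨t, ht⟩ := hNsq
  have hRq : (0:ℚ) < (r:ℚ) := by exact_mod_cast hr
  have hR0 : (r:ℚ) ≠ 0 := ne_of_gt hRq
  have hn : (0:ℚ) < (N:ℚ) := by exact_mod_cast hNpos
  have ht0 : t ≠ 0 := by
    rintro rfl
    rw [ht] at hApos; simp at hApos
  have hrR : (0:ℝ) < (r:ℝ) := by exact_mod_cast hr
  have h1 : Real.cos θ < 1 := by
    calc Real.cos θ < Real.cos 0 := Real.cos_lt_cos_of_nonneg_of_le_pi le_rfl hθπ.le hθ0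
    _ = 1 := Real.cos_zero
  have h2 : (-1:ℝ) < Real.cos θ := by
    calc (-1:ℝ) = Real.cos Real.pi := Real.cos_pi.symm
    _ < Real.cos θ := Real.cos_lt_cos_of_nonneg_of_le_pi hθ0.le le_rfl hθπ
  rw [hcos] at h1 h2
  have hs1 : (s:ℝ) < r := by rwa [div_lt_one hrR] at h1
  have hs1' : s < r := by exact_mod_cast hs1
  have hs2 : (-1:ℝ) * r < s := (lt_div_iff₀ hrR).mp h2
  have hs2' : -r < s := by exact_mod_cast (by linarith : (-(r:ℝ)) < s)
  have hS2 : (s:ℚ)^2 < (r:ℚ)^2 := by exact_mod_cast sq_lt_sq' hs2' hs1'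
  have hY0 : ((N:ℚ)^2 * (r:ℚ)^2 * t) ≠ 0 := by
    apply mul_ne_zero (mul_ne_zero (by positivity) (by positivity)) ht0
  have hXP : ((N:ℚ)^2*(r:ℚ)^2*t)^2 =
      ((N:ℚ)*(r:ℚ)*x) * ((((N:ℚ)*(r:ℚ)*x) - (N:ℚ)*((r:ℚ)-(s:ℚ)))
        * (((N:ℚ)*(r:ℚ)*x) + (N:ℚ)*((r:ℚ)+(s:ℚ)))) := by
    rw [hβ] at hA; rw [hA] at ht
    field_simp at ht
    linear_combination (-(N:ℚ)^3 * (r:ℚ)) * ht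
  obtain ⟨a, b, c, hap, hbp, hcp, hab, hc2⟩ :=
    aux_theta (N:ℚ) (r:ℚ) (s:ℚ) _ _ hn hRq hS2 hY0 hXP
  exact ⟨a, b, c, hap, hbp, hcp, hab, hc2⟩
end
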